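/- The map φ : N → D(t) defined by φ(s,p) = p.L(s), from the nodes of the evaluation tree ET_M(t) to the positions of t, is a bijection. Consequently ET_M(t) is a finite tree and the evaluation of t inspects every position of t exactly once. -/

import Mathlib

/-- A position is a finite list of positive natural numbers. -/
abbrev Pos : Type := List ℕ+

/-- `below p q` (written `p ≤ q` in the paper) holds iff `q` is a prefix of `p`. -/
def below (p q : Pos) : Prop := ∃ q'' : Pos, p = q ++ q''

/-- Terms over a signature `F`, with a single variable `ω` (patterns are linear). -/
inductive Tm (F : Type) : Type
  | var : Tm F
  | app : F → List (Tm F) → Tm F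

variable {F : Type}

/-- Head symbol of a term (none for the variable). -/
def hd : Tm F → Option F
  | .var => none
  | .app f _ => some f

/-- The subterm of `t` at position `p`, if `p` is in the domain of `t`. -/
def subtermAt : Tm F → Pos → Option (Tm F)
  | t, [] => some t
  | .var, _ :: _ => none
  | .app _ ts, i :: p => (ts[(i : ℕ) - 1]?).bind (fun u => subtermAt u p)

/-- The domain (set of positions) of a term. -/
def Dom (t : Tm F) : Set Pos := {p | (subtermAt t p).isSome}

/-- `t` is a closed term: it contains no variable. -/
def Closed (t : Tm F) : Prop := ∀ p u, subtermAt t p = some u → u ≠ Tm.var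

/-- Terms that respect the arity function of the signature. -/
inductive WF (ar : F → ℕ) : Tm F → Prop
  | var : WF ar Tm.var
  | app : ∀ f ts, ts.length = ar f → (∀ u ∈ ts, WF ar u) → WF ar (Tm.app f ts)

/-- Pattern `ℓ` matches term `t` at position `p`: for every non-variable
position `p'` of `ℓ`, the head symbols of `t[p.p']` and `ℓ[p']` agree. -/
def Matches (ℓ t : Tm F) (p : Pos) : Prop :=
  ∀ p' u, subtermAt ℓ p' = some u → u ≠ Tm.var →
    ∃ v, subtermAt t (p ++ p') = some v ∧ hd v = hd u

/-- A match obligation: a set of (subpattern, position) pairs. -/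
abbrev Obl (F : Type) := Set (Tm F × Pos)
/-- A match goal: a match obligation together with a match announcement. -/
abbrev Goal (F : Type) := Obl F × (Tm F × Pos)
/-- A state of the set automaton: a set of match goals. -/
abbrev St (F : Type) := Set (Goal F)

/-- The positions of a match obligation. -/
def posOf (mo : Obl F) : Set Pos := {p | ∃ u, (u, p) ∈ mo}

/-- All match obligation positions of a state. -/
def posMO (s : St F) : Set Pos := {p | ∃ g ∈ s, p ∈ posOf g.1}

/-- Reduction of a match obligation after observing a symbol of arity `n`
at position `p`: pairs at other positions are kept, and the pair at `p` is
replaced by obligations for its non-variable arguments. -/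
def reduce (mo : Obl F) (n : ℕ) (p : Pos) : Obl F :=
  {x | x ∈ mo ∧ x.2 ≠ p} ∪
  {x | ∃ (ℓ u : Tm F) (i : ℕ+), (ℓ, p) ∈ mo ∧ (i : ℕ) ≤ n ∧
        subtermAt ℓ [i] = some u ∧ u ≠ Tm.var ∧ x = (u, p ++ [i])}

/-- The `f`-derivative of state `s` labelled with position `lab`:
unchanged goals, reduced goals and fresh goals. -/
def derivS (pats : Set (Tm F)) (ar : F → ℕ) (s : St F) (lab : Pos) (f : F) : St F :=
  {g | g ∈ s ∧ lab ∉ posOf g.1} ∪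
  {g | ∃ mo ma, (mo, ma) ∈ s ∧ (∃ ℓ, (ℓ, lab) ∈ mo ∧ hd ℓ = some f) ∧
        reduce mo (ar f) lab ≠ ∅ ∧ g = (reduce mo (ar f) lab, ma)} ∪
  {g | ∃ (ℓ : Tm F) (i : ℕ+), ℓ ∈ pats ∧ (i : ℕ) ≤ ar f ∧
        g = ({(ℓ, lab ++ [i])}, (ℓ, lab ++ [i]))}

/-- The direct dependency relation: the obligation position sets intersect. -/
def dirDep (g₁ g₂ : Goal F) : Prop := (posOf g₁.1 ∩ posOf g₂.1).Nonempty

/-- `K` is an equivalence class of `X` under the transitive closure of the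
direct dependency relation restricted to `X`. -/
def IsClass (X K : St F) : Prop :=
  ∃ g ∈ X, K = {g' | g' ∈ X ∧
    Relation.ReflTransGen (fun a b => a ∈ X ∧ b ∈ X ∧ dirDep a b) g g'}

/-- The match announcement positions of a set of goals. -/
def posMA (K : St F) : Set Pos := {p | ∃ mo ℓ, (mo, (ℓ, p)) ∈ K}

/-- `g` is the greatest common prefix (join) of the set of positions `P`. -/
def IsGcp (P : Set Pos) (g : Pos) : Prop :=
  (∀ p ∈ P, below p g) ∧ ∀ r : Pos, (∀ p ∈ P, below p r) → below g r

/-- Lift a match goal by stripping the common prefix `g` from all positions. -/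
def liftGoal (g : Pos) (x : Goal F) : Goal F :=
  ((fun y : Tm F × Pos => (y.1, y.2.drop g.length)) '' x.1,
   (x.2.1, x.2.2.drop g.length))

/-- Lift a set of match goals. -/
def liftSt (g : Pos) (K : St F) : St F := liftGoal g '' K

/-- The transition function of the set automaton: `(s', p') ∈ delta pats ar L s f`
iff `s'` is the lifting of a dependency class `K` of the derivative and `p'` is
the greatest common prefix of the announcement positions of `K`. -/
def delta (pats : Set (Tm F)) (ar : F → ℕ) (L : St F → Pos) (s : St F) (f : F) :
    Set (St F × Pos) :=
  {x | ∃ K, IsClass (derivS pats ar s (L s) f) K ∧ IsGcp (posMA K) x.2 ∧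
        x.1 = liftSt x.2 K}

/-- The initial state: all fresh root goals. -/
def initSt (pats : Set (Tm F)) : St F :=
  {g | ∃ ℓ ∈ pats, g = ({(ℓ, ([] : Pos))}, (ℓ, ([] : Pos)))}

/-- Reachable states of the set automaton. -/
inductive Reachable (pats : Set (Tm F)) (ar : F → ℕ) (L : St F → Pos) : St F → Prop
  | init : Reachable pats ar L (initSt pats)
  | step : ∀ s f s' p, Reachable pats ar L s →
      (s', p) ∈ delta pats ar L s f → Reachable pats ar L s'

/-- The labelling function `L` picks, for every reachable state, an obligation
position of one of its root goals. -/
def RootLabel (pats : Set (Tm F)) (ar : F → ℕ) (L : St F → Pos) : Prop :=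
  ∀ s, Reachable pats ar L s →
    ∃ mo ℓ, (mo, (ℓ, ([] : Pos))) ∈ s ∧ L s ∈ posOf mo

/-- The nodes of the evaluation tree `ET_M(t)`. -/
inductive Node (pats : Set (Tm F)) (ar : F → ℕ) (L : St F → Pos) (t : Tm F) :
    St F → Pos → Prop
  | root : Node pats ar L t (initSt pats) []
  | step : ∀ s p f s' p', Node pats ar L t s p →
      (∃ v, subtermAt t (p ++ L s) = some v ∧ hd v = some f) →
      (s', p') ∈ delta pats ar L s f →
      Node pats ar L t s' (p ++ p')

/-- The edges of the evaluation tree `ET_M(t)`. -/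
def EdgeRel (pats : Set (Tm F)) (ar : F → ℕ) (L : St F → Pos) (t : Tm F)
    (s : St F) (p : Pos) (s' : St F) (q : Pos) : Prop :=
  Node pats ar L t s p ∧ ∃ f p',
    (∃ v, subtermAt t (p ++ L s) = some v ∧ hd v = some f) ∧
    (s', p') ∈ delta pats ar L s f ∧ q = p ++ p'

/-- The work set `W(s,p)`: the positions of `t` below the position pointer that
still have to be inspected. -/
def Work (t : Tm F) (s : St F) (p : Pos) : Set Pos :=
  {x | ∃ q, x = p ++ q ∧ x ∈ Dom t ∧ ∃ r ∈ posMO s, below q r}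

/-- The output function: match announcements whose obligation is completed by
observing `f` at the label position. -/
def outS (ar : F → ℕ) (L : St F → Pos) (s : St F) (f : F) : Set (Tm F × Pos) :=
  {ma | ({(Tm.app f (List.replicate (ar f) Tm.var), L s)}, ma) ∈ s}

/-! ### Auxiliary development for the proof -/

section Aux

lemma below_iff {p q : Pos} : below p q ↔ q <+: p := by
  constructor
  · rintro ⟨q'', rfl⟩; exact ⟨q'', rfl⟩
  · rintro ⟨q'', rfl⟩; exact ⟨q'', rfl⟩

lemma prefix_antisymm' {p q : Pos} (h1 : p <+: q) (h2 : q <+: p) : p = q :=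
  h1.eq_of_length (le_antisymm h1.length_le h2.length_le)

lemma prefix_comparable {p q r : Pos} (h1 : p <+: r) (h2 : q <+: r) :
    p <+: q ∨ q <+: p := by
  rcases le_total p.length q.length with h | h
  · exact Or.inl (List.prefix_of_prefix_length_le h1 h2 h)
  · exact Or.inr (List.prefix_of_prefix_length_le h2 h1 h)

lemma prefix_concat_cases {q l : Pos} {a : ℕ+} (h : q <+: l ++ [a]) :
    q <+: l ∨ q = l ++ [a] := by
  rcases le_or_gt q.length l.length with hl | hl
  · exact Or.inl (List.prefix_of_prefix_length_le h (List.prefix_append l [a]) hl)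
  · right
    apply h.eq_of_length
    have h2 := h.length_le
    simp only [List.length_append, List.length_singleton] at h2 ⊢
    omega

lemma not_concat_prefix_self {l : Pos} {a : ℕ+} (h : l ++ [a] <+: l) : False := by
  have := h.length_le; simp at this

lemma subtermAt_nil (t : Tm F) : subtermAt t [] = some t := by cases t <;> rfl

lemma subtermAt_append (t : Tm F) (p q : Pos) :
    subtermAt t (p ++ q) = (subtermAt t p).bind (fun u => subtermAt u q) := by
  induction p generalizing t with
  | nil => simp [subtermAt_nil]
  | cons i p ih =>
    cases t with
    | var => simp [subtermAt]
    | app f ts =>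
      simp only [List.cons_append, subtermAt]
      cases h : ts[(i : ℕ) - 1]? with
      | none => simp
      | some u => simp [ih]

lemma wf_subterm {ar : F → ℕ} :
    ∀ (p : Pos) (t : Tm F), WF ar t → ∀ u, subtermAt t p = some u → WF ar u := by
  intro p
  induction p with
  | nil =>
    intro t ht u hu
    rw [subtermAt_nil] at hu
    cases hu; exact ht
  | cons i p ih =>
    intro t ht u hu
    cases t with
    | var => simp [subtermAt] at hu
    | app f ts =>
      simp only [subtermAt, Option.bind_eq_some_iff] at hu
      obtain ⟨v, hv, h2⟩ := hu
      cases ht with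
      | app _ _ hlen hall => exact ih v (hall v (List.mem_of_getElem? hv)) u h2

lemma mem_Dom_iff {t : Tm F} {p : Pos} : p ∈ Dom t ↔ ∃ u, subtermAt t p = some u := by
  simp [Dom, Option.isSome_iff_exists]

lemma nil_mem_Dom (t : Tm F) : ([] : Pos) ∈ Dom t := by
  rw [mem_Dom_iff]; exact ⟨t, subtermAt_nil t⟩

lemma child_mem_Dom {t : Tm F} {p : Pos} {f : F} {ts : List (Tm F)}
    (h : subtermAt t p = some (Tm.app f ts)) {i : ℕ+} (hi : (i : ℕ) ≤ ts.length) :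
    p ++ [i] ∈ Dom t := by
  rw [mem_Dom_iff]
  have hlt : (i : ℕ) - 1 < ts.length := by have := i.pos; omega
  refine ⟨ts.get ⟨(i : ℕ) - 1, hlt⟩, ?_⟩
  rw [subtermAt_append, h]
  simp [subtermAt, List.getElem?_eq_getElem hlt, subtermAt_nil]

lemma dom_finite (t : Tm F) : (Dom t).Finite := by
  generalize hn : sizeOf t = n
  induction n using Nat.strong_induction_on generalizing t with
  | _ n ih =>
  cases t with
  | var =>
    apply (Set.finite_singleton ([] : Pos)).subset
    intro p hp
    rcases p with _ | ⟨i, p⟩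
    · rfl
    · simp [Dom, subtermAt] at hp
  | app f ts =>
    have IH : ∀ u ∈ ts, (Dom u).Finite := by
      intro u hu
      have h1 : sizeOf u < sizeOf ts := List.sizeOf_lt_of_mem hu
      have h2 : sizeOf ts < sizeOf (Tm.app f ts) := by
        simp only [Tm.app.sizeOf_spec]; omega
      exact ih (sizeOf u) (by omega) u rfl
    have hS : (⋃ u ∈ {x | x ∈ ts}, Dom u).Finite :=
      Set.Finite.biUnion (List.finite_toSet ts) (fun u hu => IH u hu)
    apply Set.Finite.subset
      (Set.Finite.insert ([] : Pos)
        (Set.Finite.biUnion (Set.finite_Iio ts.length)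
          (fun i _ => hS.image (fun p => ((⟨i + 1, Nat.succ_pos i⟩ : ℕ+) :: p)))))
    intro p hp
    rcases p with _ | ⟨j, q⟩
    · exact Set.mem_insert _ _
    · right
      simp only [Dom, Set.mem_setOf_eq, subtermAt] at hp
      rw [Option.isSome_iff_exists] at hp
      obtain ⟨u, hu⟩ := hp
      rw [Option.bind_eq_some_iff] at hu
      obtain ⟨v, hv, h2⟩ := hu
      have hjlt : (j : ℕ) - 1 < ts.length := (List.getElem?_eq_some_iff.mp hv).1
      refine Set.mem_biUnion (Set.mem_Iio.mpr hjlt) ?_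
      refine ⟨q, ?_, ?_⟩
      · exact Set.mem_biUnion (List.mem_of_getElem? hv) (mem_Dom_iff.mpr ⟨u, h2⟩)
      · have hj : (⟨(j : ℕ) - 1 + 1, Nat.succ_pos _⟩ : ℕ+) = j := by
          apply Subtype.ext
          have hp : 0 < (j : ℕ) := j.pos
          show (j : ℕ) - 1 + 1 = (j : ℕ)
          omega
        show (⟨(j : ℕ) - 1 + 1, Nat.succ_pos _⟩ : ℕ+) :: q = j :: q
        rw [hj]; rfl

end Aux

section Aux2

lemma exists_isGcp {P : Set Pos} (h : P.Nonempty) : ∃ g, IsGcp P g := by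
  classical
  obtain ⟨p₀, hp₀⟩ := h
  set T : Finset ℕ :=
    (Finset.range (p₀.length + 1)).filter (fun k => ∀ p ∈ P, p₀.take k <+: p) with hT
  have h0 : 0 ∈ T := by
    simp only [hT, Finset.mem_filter, Finset.mem_range]
    exact ⟨by omega, fun p _ => by simp⟩
  have hne : T.Nonempty := ⟨0, h0⟩
  set m := T.max' hne with hm
  have hmem : m ∈ T := T.max'_mem hne
  simp only [hT, Finset.mem_filter, Finset.mem_range] at hmem
  refine ⟨p₀.take m, fun p hp => below_iff.mpr (hmem.2 p hp), ?_⟩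
  intro r hr
  have hrp : r <+: p₀ := below_iff.mp (hr p₀ hp₀)
  have hr1 : r = p₀.take r.length := List.prefix_iff_eq_take.mp hrp
  have hrT : r.length ∈ T := by
    simp only [hT, Finset.mem_filter, Finset.mem_range]
    refine ⟨by have := hrp.length_le; omega, fun p hp => ?_⟩
    rw [← hr1]; exact below_iff.mp (hr p hp)
  have hle : r.length ≤ m := T.le_max' _ hrT
  rw [below_iff, hr1]
  exact List.prefix_of_prefix_length_le (List.take_prefix _ _) (List.take_prefix _ _)
    (by simp only [List.length_take]; omega)

lemma isGcp_unique {P : Set Pos} {g₁ g₂ : Pos} (h₁ : IsGcp P g₁) (h₂ : IsGcp P g₂) :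
    g₁ = g₂ :=
  prefix_antisymm' (below_iff.mp (h₂.2 g₁ h₁.1)) (below_iff.mp (h₁.2 g₂ h₂.1))

variable {F : Type}

lemma dirDep_symm {g₁ g₂ : Goal F} (h : dirDep g₁ g₂) : dirDep g₂ g₁ := by
  obtain ⟨x, h1, h2⟩ := h; exact ⟨x, h2, h1⟩

/-- The dependency class of a goal. -/
def classOf (X : St F) (g : Goal F) : St F :=
  {g' | g' ∈ X ∧ Relation.ReflTransGen (fun a b => a ∈ X ∧ b ∈ X ∧ dirDep a b) g g'}

lemma isClass_classOf {X : St F} {g : Goal F} (hg : g ∈ X) : IsClass X (classOf X g) :=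
  ⟨g, hg, rfl⟩

lemma mem_classOf_self {X : St F} {g : Goal F} (hg : g ∈ X) : g ∈ classOf X g :=
  ⟨hg, Relation.ReflTransGen.refl⟩

lemma class_subset {X K : St F} (hK : IsClass X K) : K ⊆ X := by
  obtain ⟨g, hg, rfl⟩ := hK; exact fun g' h => h.1

lemma class_closed {X K : St F} (hK : IsClass X K) {g₁ g₂ : Goal F}
    (h1 : g₁ ∈ K) (h2 : g₂ ∈ X) (hdd : dirDep g₁ g₂) : g₂ ∈ K := by
  obtain ⟨g, hg, rfl⟩ := hK
  exact ⟨h2, h1.2.tail ⟨h1.1, h2, hdd⟩⟩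

lemma class_eq_of_mem {X K₁ K₂ : St F} {g : Goal F} (h₁ : IsClass X K₁)
    (h₂ : IsClass X K₂) (hg₁ : g ∈ K₁) (hg₂ : g ∈ K₂) : K₁ = K₂ := by
  have hsymm : Symmetric (fun a b : Goal F => a ∈ X ∧ b ∈ X ∧ dirDep a b) :=
    fun x y ⟨hx, hy, hdd⟩ => ⟨hy, hx, dirDep_symm hdd⟩
  obtain ⟨a, ha, rfl⟩ := h₁
  obtain ⟨b, hb, rfl⟩ := h₂
  ext g'
  constructor
  · rintro ⟨hg', hr⟩
    exact ⟨hg', hg₂.2.trans ((@Relation.ReflTransGen.symmetric _ _ ⟨fun _ _ h => hsymm h⟩ |>.symm _ _ hg₁.2).trans hr)⟩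
  · rintro ⟨hg', hr⟩
    exact ⟨hg', hg₁.2.trans ((@Relation.ReflTransGen.symmetric _ _ ⟨fun _ _ h => hsymm h⟩ |>.symm _ _ hg₂.2).trans hr)⟩

lemma posMO_intro {s : St F} {mo : Obl F} {ma : Tm F × Pos} {u : Tm F} {q : Pos}
    (h : (mo, ma) ∈ s) (hu : (u, q) ∈ mo) : q ∈ posMO s :=
  ⟨(mo, ma), h, u, hu⟩

lemma posMO_elim {s : St F} {q : Pos} (h : q ∈ posMO s) :
    ∃ mo ma u, (mo, ma) ∈ s ∧ (u, q) ∈ mo := by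
  obtain ⟨⟨mo, ma⟩, hg, u, hu⟩ := h
  exact ⟨mo, ma, u, hg, hu⟩

lemma posMO_mono {s s' : St F} (h : s ⊆ s') : posMO s ⊆ posMO s' := by
  rintro q ⟨g, hg, hq⟩; exact ⟨g, h hg, hq⟩

lemma posOf_singleton (ℓ : Tm F) (q : Pos) : posOf ({(ℓ, q)} : Obl F) = {q} := by
  ext r
  simp [posOf, Prod.ext_iff]

lemma work_subset_dom {t : Tm F} {s : St F} {p : Pos} : Work t s p ⊆ Dom t := by
  rintro x ⟨q, _, hd, _⟩; exact hd

end Aux2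

section Core

variable {F : Type}

/-- The invariant maintained at every node of the evaluation tree. -/
structure NInv (pats : Set (Tm F)) (ar : F → ℕ) (t : Tm F) (s : St F) (p : Pos) : Prop where
  wfmo : ∀ mo ma, (mo, ma) ∈ s → ∀ ℓ q, (ℓ, q) ∈ mo →
    ℓ ≠ Tm.var ∧ WF ar ℓ ∧ p ++ q ∈ Dom t
  prim : ∀ q ∈ posMO s, ∀ ℓ ∈ pats, ({(ℓ, q)}, (ℓ, q)) ∈ s
  incomp : ∀ q₁ ∈ posMO s, ∀ q₂ ∈ posMO s, q₁ <+: q₂ → q₁ = q₂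
  anch : ∀ mo ℓ pa, (mo, (ℓ, pa)) ∈ s → ∀ u q, (u, q) ∈ mo → pa <+: q

variable {pats : Set (Tm F)} {ar : F → ℕ} {t : Tm F} {s : St F} {p lab : Pos} {f : F}
  {ts : List (Tm F)}

lemma mem_reduce {mo : Obl F} {n : ℕ} {x : Tm F × Pos} :
    x ∈ reduce mo n lab ↔ (x ∈ mo ∧ x.2 ≠ lab) ∨
      (∃ (ℓ u : Tm F) (i : ℕ+), (ℓ, lab) ∈ mo ∧ (i : ℕ) ≤ n ∧ subtermAt ℓ [i] = some u ∧
        u ≠ Tm.var ∧ x = (u, lab ++ [i])) := Iff.rfl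

lemma mem_derivS {g : Goal F} :
    g ∈ derivS pats ar s lab f ↔
      (g ∈ s ∧ lab ∉ posOf g.1) ∨
      (∃ mo ma, (mo, ma) ∈ s ∧ (∃ ℓ, (ℓ, lab) ∈ mo ∧ hd ℓ = some f) ∧
        reduce mo (ar f) lab ≠ ∅ ∧ g = (reduce mo (ar f) lab, ma)) ∨
      (∃ (ℓ : Tm F) (i : ℕ+), ℓ ∈ pats ∧ (i : ℕ) ≤ ar f ∧
        g = ({(ℓ, lab ++ [i])}, (ℓ, lab ++ [i]))) := by
  simp only [derivS, Set.mem_union, Set.mem_setOf_eq, or_assoc]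

lemma deriv_wfmo (hWF : ∀ ℓ ∈ pats, WF ar ℓ) (hpv : ∀ ℓ ∈ pats, ℓ ≠ Tm.var)
    (hInv : NInv pats ar t s p) (hts : subtermAt t (p ++ lab) = some (Tm.app f ts))
    (hlen : ts.length = ar f) :
    ∀ mo ma, (mo, ma) ∈ derivS pats ar s lab f → ∀ ℓ q, (ℓ, q) ∈ mo →
      ℓ ≠ Tm.var ∧ WF ar ℓ ∧ p ++ q ∈ Dom t := by
  intro mo ma hg ℓ q hq
  rcases mem_derivS.mp hg with ⟨hs, _⟩ | ⟨mo₀, ma₀, hmo₀, _, _, heq⟩ | ⟨ℓ₀, i, hℓ₀, hi, heq⟩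
  · exact hInv.wfmo mo ma hs ℓ q hq
  · simp only [Prod.mk.injEq] at heq
    obtain ⟨h1, h2⟩ := heq
    subst h1
    rcases mem_reduce.mp hq with ⟨hin, _⟩ | ⟨ℓ₁, u, i, hℓ₁, hi, hsub, hu, hx⟩
    · exact hInv.wfmo mo₀ ma₀ hmo₀ ℓ q hin
    · simp only [Prod.mk.injEq] at hx
      obtain ⟨rfl, rfl⟩ := hx
      obtain ⟨-, hwfℓ₁, -⟩ := hInv.wfmo mo₀ ma₀ hmo₀ ℓ₁ lab hℓ₁
      refine ⟨hu, wf_subterm [i] ℓ₁ hwfℓ₁ _ hsub, ?_⟩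
      rw [← List.append_assoc]
      exact child_mem_Dom hts (by omega)
  · simp only [Prod.mk.injEq] at heq
    obtain ⟨h1, h2⟩ := heq
    subst h1
    simp only [Set.mem_singleton_iff, Prod.mk.injEq] at hq
    obtain ⟨rfl, rfl⟩ := hq
    refine ⟨hpv ℓ hℓ₀, hWF ℓ hℓ₀, ?_⟩
    rw [← List.append_assoc]
    exact child_mem_Dom hts (by omega)

lemma posMO_deriv (hpats : pats.Nonempty) (hInv : NInv pats ar t s p) :
    posMO (derivS pats ar s lab f) =
      ((posMO s) \ {lab}) ∪ {q | ∃ i : ℕ+, (i : ℕ) ≤ ar f ∧ q = lab ++ [i]} := by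
  ext q
  constructor
  · intro hq
    obtain ⟨mo, ma, u, hg, hu⟩ := posMO_elim hq
    rcases mem_derivS.mp hg with ⟨hs, hnl⟩ | ⟨mo₀, ma₀, hmo₀, _, _, heq⟩ | ⟨ℓ₀, i, hℓ₀, hi, heq⟩
    · left
      refine ⟨posMO_intro hs hu, ?_⟩
      simp only [Set.mem_singleton_iff]
      rintro rfl
      exact hnl ⟨u, hu⟩
    · simp only [Prod.mk.injEq] at heq
      obtain ⟨h1, h2⟩ := heq
      subst h1
      rcases mem_reduce.mp hu with ⟨hin, hne⟩ | ⟨ℓ₁, u₁, i, hℓ₁, hi, hsub, hu₁, hx⟩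
      · left
        exact ⟨posMO_intro hmo₀ hin, by simpa using hne⟩
      · right
        simp only [Prod.mk.injEq] at hx
        exact ⟨i, hi, hx.2⟩
    · simp only [Prod.mk.injEq] at heq
      obtain ⟨h1, h2⟩ := heq
      subst h1
      simp only [Set.mem_singleton_iff, Prod.mk.injEq] at hu
      right
      exact ⟨i, hi, hu.2⟩
  · intro hq
    obtain ⟨ℓ, hℓ⟩ := hpats
    rcases hq with ⟨hmem, hne⟩ | ⟨i, hi, rfl⟩
    · rw [Set.mem_singleton_iff] at hne
      have hg : ({(ℓ, q)}, (ℓ, q)) ∈ s := hInv.prim q hmem ℓ hℓ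
      have hgD : ({(ℓ, q)}, (ℓ, q)) ∈ derivS pats ar s lab f := by
        apply mem_derivS.mpr
        left
        refine ⟨hg, ?_⟩
        show lab ∉ posOf ({(ℓ, q)} : Obl F)
        rw [posOf_singleton]
        simp only [Set.mem_singleton_iff]
        exact fun h => hne h.symm
      exact posMO_intro hgD rfl
    · have hgD : ({(ℓ, lab ++ [i])}, (ℓ, lab ++ [i])) ∈ derivS pats ar s lab f :=
        mem_derivS.mpr (Or.inr (Or.inr ⟨ℓ, i, hℓ, hi, rfl⟩))
      exact posMO_intro hgD rfl

lemma deriv_prim (hpats : pats.Nonempty) (hInv : NInv pats ar t s p) :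
    ∀ q ∈ posMO (derivS pats ar s lab f), ∀ ℓ ∈ pats,
      ({(ℓ, q)}, (ℓ, q)) ∈ derivS pats ar s lab f := by
  intro q hq ℓ hℓ
  rw [posMO_deriv hpats hInv] at hq
  rcases hq with ⟨hmem, hne⟩ | ⟨i, hi, rfl⟩
  · rw [Set.mem_singleton_iff] at hne
    apply mem_derivS.mpr
    left
    refine ⟨hInv.prim q hmem ℓ hℓ, ?_⟩
    show lab ∉ posOf ({(ℓ, q)} : Obl F)
    rw [posOf_singleton]
    simp only [Set.mem_singleton_iff]
    exact fun h => hne h.symm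
  · exact mem_derivS.mpr (Or.inr (Or.inr ⟨ℓ, i, hℓ, hi, rfl⟩))

lemma deriv_incomp (hpats : pats.Nonempty) (hInv : NInv pats ar t s p)
    (hlabmem : lab ∈ posMO s) :
    ∀ q₁ ∈ posMO (derivS pats ar s lab f), ∀ q₂ ∈ posMO (derivS pats ar s lab f),
      q₁ <+: q₂ → q₁ = q₂ := by
  intro q₁ h₁ q₂ h₂ hp12
  rw [posMO_deriv hpats hInv] at h₁ h₂
  rcases h₁ with ⟨h₁s, h₁ne⟩ | ⟨i, hi, rfl⟩ <;> rcases h₂ with ⟨h₂s, h₂ne⟩ | ⟨j, hj, hj2⟩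
  · exact hInv.incomp q₁ h₁s q₂ h₂s hp12
  · subst hj2
    rcases prefix_concat_cases hp12 with h | h
    · exact absurd (hInv.incomp q₁ h₁s lab hlabmem h) (by simpa using h₁ne)
    · exact h
  · have hlq₂ : lab <+: q₂ := (List.prefix_append lab [i]).trans hp12
    exact absurd (hInv.incomp lab hlabmem q₂ h₂s hlq₂).symm (by simpa using h₂ne)
  · subst hj2
    have h4 := (List.prefix_append_right_inj lab).mp hp12
    have h5 : ([i] : Pos) = [j] := h4.eq_of_length (by simp)
    simp only [List.cons.injEq] at h5
    rw [h5.1]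

lemma deriv_anch (hInv : NInv pats ar t s p) :
    ∀ mo ℓ pa, (mo, (ℓ, pa)) ∈ derivS pats ar s lab f →
      ∀ u q, (u, q) ∈ mo → pa <+: q := by
  intro mo ℓ pa hg u q hq
  rcases mem_derivS.mp hg with ⟨hs, _⟩ | ⟨mo₀, ma₀, hmo₀, _, _, heq⟩ | ⟨ℓ₀, i, hℓ₀, hi, heq⟩
  · exact hInv.anch mo ℓ pa hs u q hq
  · obtain ⟨ℓ₀, pa₀⟩ := ma₀
    simp only [Prod.mk.injEq] at heq
    obtain ⟨h1, h2, h3⟩ := heq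
    subst h1; subst h2; subst h3
    rcases mem_reduce.mp hq with ⟨hin, _⟩ | ⟨ℓ₁, u₁, i, hℓ₁, hi, hsub, hu₁, hx⟩
    · exact hInv.anch mo₀ ℓ pa hmo₀ u q hin
    · simp only [Prod.mk.injEq] at hx
      rw [hx.2]
      exact (hInv.anch mo₀ ℓ pa hmo₀ ℓ₁ lab hℓ₁).trans (List.prefix_append lab [i])
  · simp only [Prod.mk.injEq] at heq
    obtain ⟨h1, h2, h3⟩ := heq
    subst h1
    simp only [Set.mem_singleton_iff, Prod.mk.injEq] at hq
    rw [h3, hq.2]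

end Core

section Succ

variable {F : Type} {pats : Set (Tm F)} {ar : F → ℕ} {t : Tm F} {s : St F} {p : Pos}
  {f : F} {ts : List (Tm F)} {L : St F → Pos}

lemma class_pos_prefix {D K : St F} {p' : Pos}
    (hanch : ∀ mo ℓ pa, (mo, (ℓ, pa)) ∈ D → ∀ u q, (u, q) ∈ mo → pa <+: q)
    (hK : IsClass D K) (hgcp : IsGcp (posMA K) p') :
    ∀ q ∈ posMO K, p' <+: q := by
  intro q hq
  obtain ⟨mo, ma, u, hg, hu⟩ := posMO_elim hq
  obtain ⟨ℓ, pa⟩ := ma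
  have h1 : pa <+: q := hanch mo ℓ pa (class_subset hK hg) u q hu
  have h2 : p' <+: pa := below_iff.mp (hgcp.1 pa ⟨mo, ℓ, hg⟩)
  exact h2.trans h1

lemma posMO_lift {K : St F} {p' : Pos} (hpre : ∀ q ∈ posMO K, p' <+: q) :
    posMO (liftSt p' K) = {q | p' ++ q ∈ posMO K} := by
  ext q
  constructor
  · intro hq
    obtain ⟨mo', ma', u, hg', hu⟩ := posMO_elim hq
    obtain ⟨⟨mo, ma⟩, hgK, heq⟩ := hg'
    have h1 : (fun y : Tm F × Pos => (y.1, y.2.drop p'.length)) '' mo = mo' :=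
      congrArg Prod.fst heq
    rw [← h1] at hu
    obtain ⟨⟨u₀, z⟩, hz, hz2⟩ := hu
    simp only [Prod.mk.injEq] at hz2
    obtain ⟨rfl, h3⟩ := hz2
    obtain ⟨w, hw⟩ := hpre z (posMO_intro hgK hz)
    have h4 : q = w := by rw [← h3, ← hw, List.drop_left]
    subst h4
    show p' ++ q ∈ posMO K
    rw [hw]
    exact posMO_intro hgK hz
  · intro hq
    obtain ⟨mo, ma, u, hg, hu⟩ := posMO_elim hq
    refine posMO_intro (s := liftSt p' K)
      (mo := (fun y : Tm F × Pos => (y.1, y.2.drop p'.length)) '' mo)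
      (ma := (ma.1, ma.2.drop p'.length)) (u := u) ⟨(mo, ma), hg, rfl⟩ ?_
    exact ⟨(u, p' ++ q), hu, by simp [List.drop_left]⟩

lemma succ_inv (hpats : pats.Nonempty) (hWF : ∀ ℓ ∈ pats, WF ar ℓ)
    (hpv : ∀ ℓ ∈ pats, ℓ ≠ Tm.var)
    (hInv : NInv pats ar t s p) (hlabmem : L s ∈ posMO s)
    (hts : subtermAt t (p ++ L s) = some (Tm.app f ts)) (hlen : ts.length = ar f)
    {s' : St F} {p' : Pos} (hdelta : (s', p') ∈ delta pats ar L s f) :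
    NInv pats ar t s' (p ++ p') := by
  simp only [delta, Set.mem_setOf_eq] at hdelta
  obtain ⟨K, hKc, hgcp, hs'⟩ := hdelta
  subst hs'
  have hanch := deriv_anch (lab := L s) (f := f) hInv
  have hpre : ∀ q ∈ posMO K, p' <+: q := class_pos_prefix hanch hKc hgcp
  have hKsub : K ⊆ derivS pats ar s (L s) f := class_subset hKc
  have hlift := posMO_lift hpre
  constructor
  · -- wfmo
    intro mo' ma' hg' ℓ q hq
    obtain ⟨⟨mo, ma⟩, hgK, heq⟩ := hg'
    have h1 : (fun y : Tm F × Pos => (y.1, y.2.drop p'.length)) '' mo = mo' :=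
      congrArg Prod.fst heq
    rw [← h1] at hq
    obtain ⟨⟨u₀, z⟩, hz, hz2⟩ := hq
    simp only [Prod.mk.injEq] at hz2
    obtain ⟨rfl, h3⟩ := hz2
    obtain ⟨w, hw⟩ := hpre z (posMO_intro hgK hz)
    have hq2 : z = p' ++ q := by rw [← hw, ← h3, ← hw, List.drop_left]
    obtain ⟨ha, hb, hcDom⟩ := deriv_wfmo hWF hpv hInv hts hlen mo ma (hKsub hgK) u₀ z hz
    refine ⟨ha, hb, ?_⟩
    rw [hq2, ← List.append_assoc] at hcDom
    exact hcDom
  · -- prim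
    intro q hq ℓ hℓ
    rw [hlift] at hq
    have hqD : p' ++ q ∈ posMO (derivS pats ar s (L s) f) := posMO_mono hKsub hq
    obtain ⟨mo, ma, u, hgK, hu⟩ := posMO_elim hq
    have hprimD : ({(ℓ, p' ++ q)}, (ℓ, p' ++ q)) ∈ derivS pats ar s (L s) f :=
      deriv_prim hpats hInv _ hqD ℓ hℓ
    have hprimK : ({(ℓ, p' ++ q)}, (ℓ, p' ++ q)) ∈ K := by
      apply class_closed hKc hgK hprimD
      refine ⟨p' ++ q, ⟨u, hu⟩, ?_⟩
      show p' ++ q ∈ posOf ({(ℓ, p' ++ q)} : Obl F)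
      rw [posOf_singleton]; rfl
    refine ⟨({(ℓ, p' ++ q)}, (ℓ, p' ++ q)), hprimK, ?_⟩
    show liftGoal p' _ = _
    rw [liftGoal]
    simp [Set.image_singleton, List.drop_left]
  · -- incomp
    intro q₁ h₁ q₂ h₂ hp12
    rw [hlift] at h₁ h₂
    have h3 := deriv_incomp hpats hInv hlabmem _ (posMO_mono hKsub h₁) _
      (posMO_mono hKsub h₂) ((List.prefix_append_right_inj p').mpr hp12)
    exact List.append_cancel_left h3
  · -- anch
    intro mo' ℓ pa' hg' u q hq
    obtain ⟨⟨mo, ⟨ℓ₀, pa⟩⟩, hgK, heq⟩ := hg'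
    rw [liftGoal] at heq
    simp only [Prod.mk.injEq] at heq
    obtain ⟨h1, h2a, h2b⟩ := heq
    rw [← h1] at hq
    obtain ⟨⟨u₀, z⟩, hz, hz2⟩ := hq
    simp only [Prod.mk.injEq] at hz2
    obtain ⟨rfl, h4⟩ := hz2
    obtain ⟨wa, hwa⟩ := below_iff.mp (hgcp.1 pa ⟨mo, ℓ₀, hgK⟩)
    obtain ⟨wz, hwz⟩ := hpre z (posMO_intro hgK hz)
    have hanchz : pa <+: z := hanch mo ℓ₀ pa (hKsub hgK) u₀ z hz
    rw [← hwa, ← hwz] at hanchz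
    have h5 : pa' = wa := by rw [← h2b, ← hwa, List.drop_left]
    have h6 : q = wz := by rw [← h4, ← hwz, List.drop_left]
    rw [h5, h6]
    exact (List.prefix_append_right_inj p').mp hanchz

lemma phi_mem_work_aux (hlabmem : L s ∈ posMO s) (hDom : p ++ L s ∈ Dom t) :
    p ++ L s ∈ Work t s p :=
  ⟨L s, rfl, hDom, L s, hlabmem, ⟨[], (List.append_nil _).symm⟩⟩

lemma succ_W_subset (hpats : pats.Nonempty)
    (hInv : NInv pats ar t s p) (hlabmem : L s ∈ posMO s)
    {s' : St F} {p' : Pos} (hdelta : (s', p') ∈ delta pats ar L s f) :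
    Work t s' (p ++ p') ⊆ Work t s p \ {p ++ L s} := by
  simp only [delta, Set.mem_setOf_eq] at hdelta
  obtain ⟨K, hKc, hgcp, hs'⟩ := hdelta
  subst hs'
  have hanch := deriv_anch (lab := L s) (f := f) hInv
  have hpre : ∀ q ∈ posMO K, p' <+: q := class_pos_prefix hanch hKc hgcp
  have hlift := posMO_lift hpre
  intro y hy
  obtain ⟨q'', rfl, hyDom, r'', hr'', hbel⟩ := hy
  rw [hlift] at hr''
  have hrD : p' ++ r'' ∈ posMO (derivS pats ar s (L s) f) :=
    posMO_mono (class_subset hKc) hr''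
  have hrq : p' ++ r'' <+: p' ++ q'' :=
    (List.prefix_append_right_inj p').mpr (below_iff.mp hbel)
  rw [posMO_deriv hpats hInv] at hrD
  rcases hrD with ⟨hmem, hne⟩ | ⟨i, hi, heq⟩
  · refine ⟨⟨p' ++ q'', List.append_assoc p p' q'', hyDom, p' ++ r'', hmem,
      below_iff.mpr hrq⟩, ?_⟩
    simp only [Set.mem_singleton_iff]
    intro hEq
    rw [List.append_assoc] at hEq
    have hq := List.append_cancel_left hEq
    rw [hq] at hrq
    have hne' : p' ++ r'' ≠ L s := by simpa using hne
    exact hne' (hInv.incomp _ hmem _ hlabmem hrq)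
  · rw [heq] at hrq
    refine ⟨⟨p' ++ q'', List.append_assoc p p' q'', hyDom, L s, hlabmem,
      below_iff.mpr ((List.prefix_append (L s) [i]).trans hrq)⟩, ?_⟩
    simp only [Set.mem_singleton_iff]
    intro hEq
    rw [List.append_assoc] at hEq
    have hq := List.append_cancel_left hEq
    rw [hq] at hrq
    exact not_concat_prefix_self hrq

lemma succ_W_disjoint (hpats : pats.Nonempty)
    (hInv : NInv pats ar t s p) (hlabmem : L s ∈ posMO s)
    {s₁ s₂ : St F} {p₁ p₂ : Pos}
    (h₁ : (s₁, p₁) ∈ delta pats ar L s f) (h₂ : (s₂, p₂) ∈ delta pats ar L s f)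
    (hne : ¬(s₁ = s₂ ∧ p₁ = p₂)) {y : Pos}
    (hy₁ : y ∈ Work t s₁ (p ++ p₁)) (hy₂ : y ∈ Work t s₂ (p ++ p₂)) : False := by
  simp only [delta, Set.mem_setOf_eq] at h₁ h₂
  obtain ⟨K₁, hK₁, hgcp₁, hs₁⟩ := h₁
  obtain ⟨K₂, hK₂, hgcp₂, hs₂⟩ := h₂
  subst hs₁; subst hs₂
  have hanch := deriv_anch (lab := L s) (f := f) hInv
  have hpre₁ := class_pos_prefix hanch hK₁ hgcp₁
  have hpre₂ := class_pos_prefix hanch hK₂ hgcp₂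
  suffices hKK : K₁ = K₂ by
    subst hKK
    exact hne ⟨by rw [isGcp_unique hgcp₁ hgcp₂], isGcp_unique hgcp₁ hgcp₂⟩
  obtain ⟨q₁, hyq₁, hyDom, r₁, hr₁, hb₁⟩ := hy₁
  obtain ⟨q₂, hyq₂, -, r₂, hr₂, hb₂⟩ := hy₂
  rw [posMO_lift hpre₁] at hr₁
  rw [posMO_lift hpre₂] at hr₂
  have hqq : p₁ ++ q₁ = p₂ ++ q₂ := by
    apply List.append_cancel_left (as := p)
    rw [← List.append_assoc, ← List.append_assoc, ← hyq₁, ← hyq₂]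
  have hR₁ : p₁ ++ r₁ <+: p₁ ++ q₁ :=
    (List.prefix_append_right_inj p₁).mpr (below_iff.mp hb₁)
  have hR₂ : p₂ ++ r₂ <+: p₁ ++ q₁ := by
    rw [hqq]
    exact (List.prefix_append_right_inj p₂).mpr (below_iff.mp hb₂)
  have hRR : p₁ ++ r₁ = p₂ ++ r₂ := by
    rcases prefix_comparable hR₁ hR₂ with h | h
    · exact deriv_incomp hpats hInv hlabmem _ (posMO_mono (class_subset hK₁) hr₁) _
        (posMO_mono (class_subset hK₂) hr₂) h
    · exact (deriv_incomp hpats hInv hlabmem _ (posMO_mono (class_subset hK₂) hr₂) _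
        (posMO_mono (class_subset hK₁) hr₁) h).symm
  obtain ⟨mo₁, ma₁, u₁, hg₁, hu₁⟩ := posMO_elim hr₁
  obtain ⟨mo₂, ma₂, u₂, hg₂, hu₂⟩ := posMO_elim hr₂
  have hdd : dirDep (mo₁, ma₁) (mo₂, ma₂) := by
    refine ⟨p₁ ++ r₁, ⟨u₁, hu₁⟩, ⟨u₂, ?_⟩⟩
    rw [hRR]
    exact hu₂
  have hg₂K₁ : (mo₂, ma₂) ∈ K₁ := class_closed hK₁ hg₁ (class_subset hK₂ hg₂) hdd
  exact absurd (class_eq_of_mem hK₁ hK₂ hg₂K₁ hg₂) (by intro h; exact hne (by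
    subst h
    exact ⟨by rw [isGcp_unique hgcp₁ hgcp₂], isGcp_unique hgcp₁ hgcp₂⟩))

lemma work_cover (hpats : pats.Nonempty)
    (hInv : NInv pats ar t s p)
    (hts : subtermAt t (p ++ L s) = some (Tm.app f ts)) (hlen : ts.length = ar f)
    {x : Pos} (hx : x ∈ Work t s p) (hxne : x ≠ p ++ L s) :
    ∃ s' p', (s', p') ∈ delta pats ar L s f ∧ x ∈ Work t s' (p ++ p') := by
  obtain ⟨q, rfl, hxDom, r, hr, hbel⟩ := hx
  have hrq : r <+: q := below_iff.mp hbel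
  have hqne : q ≠ L s := fun h => hxne (by rw [h])
  have hmain : ∃ r', r' ∈ posMO (derivS pats ar s (L s) f) ∧ r' <+: q := by
    by_cases hlq : L s <+: q
    · obtain ⟨rest, hrest⟩ := hlq
      rcases rest with _ | ⟨i, q₃⟩
      · rw [List.append_nil] at hrest
        exact absurd hrest.symm hqne
      · subst hrest
        have hile : (i : ℕ) ≤ ar f := by
          obtain ⟨u, hu⟩ := mem_Dom_iff.mp hxDom
          rw [← List.append_assoc, subtermAt_append, hts] at hu
          simp only [Option.bind_some] at hu
          have hu2 : (subtermAt (Tm.app f ts) (i :: q₃)) = some u := hu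
          simp only [subtermAt, Option.bind_eq_some_iff] at hu2
          obtain ⟨v, hv, -⟩ := hu2
          have hlt := (List.getElem?_eq_some_iff.mp hv).1
          have := i.pos
          omega
        refine ⟨L s ++ [i], ?_, ⟨q₃, by simp⟩⟩
        rw [posMO_deriv hpats hInv]
        right
        exact ⟨i, hile, rfl⟩
    · have hrne : r ≠ L s := fun h => hlq (h ▸ hrq)
      refine ⟨r, ?_, hrq⟩
      rw [posMO_deriv hpats hInv]
      left
      exact ⟨hr, by simpa using hrne⟩
  obtain ⟨r', hr'D, hr'q⟩ := hmain
  obtain ⟨mo, ma, u, hgD, hu⟩ := posMO_elim hr'D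
  obtain ⟨mℓ, mp⟩ := ma
  have hgK : (mo, (mℓ, mp)) ∈ classOf (derivS pats ar s (L s) f) (mo, (mℓ, mp)) :=
    mem_classOf_self hgD
  have hMAne : (posMA (classOf (derivS pats ar s (L s) f) (mo, (mℓ, mp)))).Nonempty :=
    ⟨mp, mo, mℓ, hgK⟩
  obtain ⟨p', hgcp⟩ := exists_isGcp hMAne
  have hKc := isClass_classOf (X := derivS pats ar s (L s) f) hgD
  refine ⟨liftSt p' (classOf (derivS pats ar s (L s) f) (mo, (mℓ, mp))), p',
    by simp only [delta, Set.mem_setOf_eq]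
       exact ⟨classOf (derivS pats ar s (L s) f) (mo, (mℓ, mp)), hKc, hgcp, rfl⟩, ?_⟩
  have hanch := deriv_anch (lab := L s) (f := f) hInv
  have hpre := class_pos_prefix hanch hKc hgcp
  have hp'r : p' <+: r' := hpre r' (posMO_intro hgK hu)
  have hp'q : p' <+: q := hp'r.trans hr'q
  obtain ⟨q'', rfl⟩ := hp'q
  obtain ⟨w, hw⟩ := hp'r
  refine ⟨q'', (List.append_assoc p p' q'').symm, hxDom, r'.drop p'.length, ?_, ?_⟩
  · rw [posMO_lift hpre, ← hw, List.drop_left]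
    show p' ++ w ∈ posMO _
    rw [hw]
    exact posMO_intro hgK hu
  · rw [← hw, List.drop_left]
    apply below_iff.mpr
    rw [← hw] at hr'q
    exact (List.prefix_append_right_inj p').mp hr'q

end Succ

/-- Descendants of a node in the evaluation tree. -/
inductive Desc {F : Type} (pats : Set (Tm F)) (ar : F → ℕ) (L : St F → Pos) (t : Tm F) :
    St F → Pos → St F → Pos → Prop
  | refl (s p) : Desc pats ar L t s p s p
  | head {s p f s' p' s'' p''} :
      (∃ v, subtermAt t (p ++ L s) = some v ∧ hd v = some f) →
      (s', p') ∈ delta pats ar L s f →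
      Desc pats ar L t s' (p ++ p') s'' p'' → Desc pats ar L t s p s'' p''

section Main

variable {F : Type} {pats : Set (Tm F)} {ar : F → ℕ} {L : St F → Pos} {t : Tm F}

lemma node_reachable {s : St F} {p : Pos} (h : Node pats ar L t s p) :
    Reachable pats ar L s := by
  induction h with
  | root => exact Reachable.init
  | step s p f s' p' hn hv hdelta ih => exact Reachable.step s f s' p' ih hdelta

lemma node_lab_mem (hL : RootLabel pats ar L) {s : St F} {p : Pos}
    (h : Node pats ar L t s p) : L s ∈ posMO s := by
  obtain ⟨mo, ℓ, hmem, hpos⟩ := hL s (node_reachable h)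
  obtain ⟨u, hu⟩ := hpos
  exact posMO_intro hmem hu

lemma posMO_init {q : Pos} (hq : q ∈ posMO (initSt pats)) : q = [] := by
  obtain ⟨mo, ma, u, hg, hu⟩ := posMO_elim hq
  obtain ⟨ℓ₀, hℓ₀, heq⟩ := hg
  simp only [Prod.mk.injEq] at heq
  obtain ⟨h1, -⟩ := heq
  rw [h1] at hu
  simp only [Set.mem_singleton_iff, Prod.mk.injEq] at hu
  exact hu.2

lemma node_inv (hw : WF ar t) (hpats : pats.Nonempty) (hWF : ∀ ℓ ∈ pats, WF ar ℓ)
    (hpv : ∀ ℓ ∈ pats, ℓ ≠ Tm.var) (hL : RootLabel pats ar L)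
    {s : St F} {p : Pos} (h : Node pats ar L t s p) : NInv pats ar t s p := by
  induction h with
  | root =>
    constructor
    · intro mo ma hg ℓ q hq
      obtain ⟨ℓ₀, hℓ₀, heq⟩ := hg
      simp only [Prod.mk.injEq] at heq
      obtain ⟨h1, -⟩ := heq
      rw [h1] at hq
      simp only [Set.mem_singleton_iff, Prod.mk.injEq] at hq
      obtain ⟨rfl, rfl⟩ := hq
      exact ⟨hpv ℓ hℓ₀, hWF ℓ hℓ₀, by simpa using nil_mem_Dom t⟩
    · intro q hq ℓ hℓ
      rw [posMO_init hq]
      exact ⟨ℓ, hℓ, rfl⟩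
    · intro q₁ h₁ q₂ h₂ _
      rw [posMO_init h₁, posMO_init h₂]
    · intro mo ℓ pa hg u q hq
      obtain ⟨ℓ₀, hℓ₀, heq⟩ := hg
      simp only [Prod.mk.injEq] at heq
      obtain ⟨h1, -, h3⟩ := heq
      rw [h1] at hq
      simp only [Set.mem_singleton_iff, Prod.mk.injEq] at hq
      rw [h3, hq.2]
  | step s p f s' p' hn hv hdelta ih =>
    obtain ⟨v, hvs, hvh⟩ := hv
    cases v with
    | var => simp [hd] at hvh
    | app f₀ ts =>
      have hff : f₀ = f := by simpa [hd] using hvh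
      subst hff
      have hwts : WF ar (Tm.app f₀ ts) := wf_subterm _ t hw _ hvs
      have hlen : ts.length = ar f₀ := by cases hwts with | app _ _ h _ => exact h
      exact succ_inv hpats hWF hpv ih (node_lab_mem hL hn) hvs hlen hdelta

lemma node_phi_dom (hw : WF ar t) (hpats : pats.Nonempty) (hWF : ∀ ℓ ∈ pats, WF ar ℓ)
    (hpv : ∀ ℓ ∈ pats, ℓ ≠ Tm.var) (hL : RootLabel pats ar L)
    {s : St F} {p : Pos} (h : Node pats ar L t s p) : p ++ L s ∈ Dom t := by
  obtain ⟨mo, ma, u, hg, hu⟩ := posMO_elim (node_lab_mem hL h)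
  exact ((node_inv hw hpats hWF hpv hL h).wfmo mo ma hg u _ hu).2.2

lemma node_unfold (hc : Closed t) (hw : WF ar t) (hpats : pats.Nonempty)
    (hWF : ∀ ℓ ∈ pats, WF ar ℓ) (hpv : ∀ ℓ ∈ pats, ℓ ≠ Tm.var) (hL : RootLabel pats ar L)
    {s : St F} {p : Pos} (h : Node pats ar L t s p) :
    ∃ f ts, subtermAt t (p ++ L s) = some (Tm.app f ts) ∧ ts.length = ar f := by
  obtain ⟨v, hv⟩ := mem_Dom_iff.mp (node_phi_dom hw hpats hWF hpv hL h)
  cases v with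
  | var => exact absurd rfl (hc _ _ hv)
  | app f ts =>
    have hwts := wf_subterm _ t hw _ hv
    cases hwts with | app _ _ hlen _ => exact ⟨f, ts, hv, hlen⟩

lemma desc_node {s p s₁ p₁} (hdsc : Desc pats ar L t s p s₁ p₁) :
    Node pats ar L t s p → Node pats ar L t s₁ p₁ := by
  induction hdsc with
  | refl s p => exact id
  | head hv hdelta hdesc ih =>
    intro h
    exact ih (Node.step _ _ _ _ _ h hv hdelta)

lemma desc_snoc {s p s₁ p₁} (hdsc : Desc pats ar L t s p s₁ p₁) :
    ∀ f s₂ p₂, (∃ v, subtermAt t (p₁ ++ L s₁) = some v ∧ hd v = some f) →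
      (s₂, p₂) ∈ delta pats ar L s₁ f → Desc pats ar L t s p s₂ (p₁ ++ p₂) := by
  induction hdsc with
  | refl s p => exact fun f s₂ p₂ hv hdelta => Desc.head hv hdelta (Desc.refl _ _)
  | head hv' hdelta' hdesc ih =>
    exact fun f s₂ p₂ hv hdelta => Desc.head hv' hdelta' (ih f s₂ p₂ hv hdelta)

lemma node_desc_root {s : St F} {p : Pos} (h : Node pats ar L t s p) :
    Desc pats ar L t (initSt pats) [] s p := by
  induction h with
  | root => exact Desc.refl _ _
  | step s p f s' p' hn hv hdelta ih => exact desc_snoc ih f s' p' hv hdelta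

lemma desc_phi (hw : WF ar t) (hpats : pats.Nonempty) (hWF : ∀ ℓ ∈ pats, WF ar ℓ)
    (hpv : ∀ ℓ ∈ pats, ℓ ≠ Tm.var) (hL : RootLabel pats ar L) :
    ∀ {s p s₁ p₁}, Desc pats ar L t s p s₁ p₁ → Node pats ar L t s p →
      p₁ ++ L s₁ ∈ Work t s p := by
  intro s p s₁ p₁ hdsc
  induction hdsc with
  | refl s p =>
    intro hn
    exact phi_mem_work_aux (node_lab_mem hL hn) (node_phi_dom hw hpats hWF hpv hL hn)
  | head hv hdelta hdesc ih =>
    intro hn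
    have hn' := Node.step _ _ _ _ _ hn hv hdelta
    exact ((succ_W_subset hpats (node_inv hw hpats hWF hpv hL hn) (node_lab_mem hL hn)
      hdelta) (ih hn')).1

lemma main_key (hc : Closed t) (hw : WF ar t) (hpats : pats.Nonempty)
    (hWF : ∀ ℓ ∈ pats, WF ar ℓ) (hpv : ∀ ℓ ∈ pats, ℓ ≠ Tm.var)
    (hL : RootLabel pats ar L) :
    ∀ n : ℕ, ∀ s p, Node pats ar L t s p → (Work t s p).ncard ≤ n →
      (∀ x ∈ Work t s p, ∃ s₁ p₁, Desc pats ar L t s p s₁ p₁ ∧ p₁ ++ L s₁ = x) ∧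
      (∀ s₁ p₁ s₂ p₂, Desc pats ar L t s p s₁ p₁ → Desc pats ar L t s p s₂ p₂ →
        p₁ ++ L s₁ = p₂ ++ L s₂ → s₁ = s₂ ∧ p₁ = p₂) := by
  intro n
  induction n using Nat.strong_induction_on with
  | _ n ih =>
  intro s p hnode hcard
  obtain ⟨f, ts, hts, hlen⟩ := node_unfold hc hw hpats hWF hpv hL hnode
  have hInv := node_inv hw hpats hWF hpv hL hnode
  have hlabmem := node_lab_mem hL hnode
  have hWfin : (Work t s p).Finite := (dom_finite t).subset work_subset_dom
  have hphi : p ++ L s ∈ Work t s p :=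
    phi_mem_work_aux hlabmem (node_phi_dom hw hpats hWF hpv hL hnode)
  have hchild_lt : ∀ s' p', (s', p') ∈ delta pats ar L s f →
      (Work t s' (p ++ p')).ncard < (Work t s p).ncard := by
    intro s' p' hdelta
    have hsub := succ_W_subset hpats hInv hlabmem hdelta
    refine Set.ncard_lt_ncard ⟨hsub.trans Set.diff_subset, ?_⟩ hWfin
    intro hsup
    exact ((hsub (hsup hphi)).2) rfl
  have hnode' : ∀ s' p', (s', p') ∈ delta pats ar L s f → Node pats ar L t s' (p ++ p') :=
    fun s' p' hdelta => Node.step _ _ _ _ _ hnode ⟨Tm.app f ts, hts, rfl⟩ hdelta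
  have hfdet : ∀ f' : F, (∃ v, subtermAt t (p ++ L s) = some v ∧ hd v = some f') → f' = f := by
    rintro f' ⟨v, hv1, hv2⟩
    rw [hts] at hv1
    have hv3 := Option.some_injective _ hv1
    rw [← hv3] at hv2
    simpa [hd] using hv2.symm
  constructor
  · intro x hx
    by_cases hx0 : x = p ++ L s
    · exact ⟨s, p, Desc.refl _ _, hx0.symm⟩
    · obtain ⟨s', p', hdelta, hx'⟩ := work_cover hpats hInv hts hlen hx hx0
      obtain ⟨s₁, p₁, hd₁, he⟩ :=
        (ih _ (lt_of_lt_of_le (hchild_lt s' p' hdelta) hcard) s' (p ++ p')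
          (hnode' s' p' hdelta) le_rfl).1 x hx'
      exact ⟨s₁, p₁, Desc.head ⟨Tm.app f ts, hts, rfl⟩ hdelta hd₁, he⟩
  · intro s₁ p₁ s₂ p₂ hd₁ hd₂ heq
    cases hd₁ with
    | refl =>
      cases hd₂ with
      | refl => exact ⟨rfl, rfl⟩
      | @head _ _ f₂ s₂' p₂' _ _ hv₂ hdelta₂ hdsc₂ =>
        exfalso
        have hf₂ := hfdet f₂ hv₂
        subst hf₂
        have hn₂ := hnode' s₂' p₂' hdelta₂
        have h2 := (succ_W_subset hpats hInv hlabmem hdelta₂)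
          (desc_phi hw hpats hWF hpv hL hdsc₂ hn₂)
        exact h2.2 heq.symm
    | @head _ _ f₁ s₁' p₁' _ _ hv₁ hdelta₁ hdsc₁ =>
      have hf₁ := hfdet f₁ hv₁
      subst hf₁
      have hn₁ := hnode' s₁' p₁' hdelta₁
      cases hd₂ with
      | refl =>
        exfalso
        have h1 := (succ_W_subset hpats hInv hlabmem hdelta₁)
          (desc_phi hw hpats hWF hpv hL hdsc₁ hn₁)
        exact h1.2 heq
      | @head _ _ f₂ s₂' p₂' _ _ hv₂ hdelta₂ hdsc₂ =>
        have hf₂ := hfdet f₂ hv₂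
        subst hf₂
        have hn₂ := hnode' s₂' p₂' hdelta₂
        by_cases hcc : s₁' = s₂' ∧ p₁' = p₂'
        · obtain ⟨h1, h2⟩ := hcc
          subst h1; subst h2
          exact (ih _ (lt_of_lt_of_le (hchild_lt s₁' p₁' hdelta₁) hcard) s₁' (p ++ p₁')
            hn₁ le_rfl).2 _ _ _ _ hdsc₁ hdsc₂ heq
        · exfalso
          have hm₂ := desc_phi hw hpats hWF hpv hL hdsc₂ hn₂
          rw [← heq] at hm₂
          exact succ_W_disjoint hpats hInv hlabmem hdelta₁ hdelta₂ hcc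
            (desc_phi hw hpats hWF hpv hL hdsc₁ hn₁) hm₂

end Main


/-- The map `φ(s,p) = p.L(s)` is a bijection between the nodes of the
evaluation tree `ET_M(t)` and the positions of `t`; in particular the
evaluation tree is finite and every position of `t` is inspected exactly once. -/
theorem eval_tree_bijection {F : Type} (pats : Set (Tm F))
    (ar : F → ℕ) (L : St F → Pos) (t : Tm F) (hc : Closed t) (hw : WF ar t)
    (hpats : pats.Nonempty) (hWF : ∀ ℓ ∈ pats, WF ar ℓ)
    (hpv : ∀ ℓ ∈ pats, ℓ ≠ Tm.var) (hL : RootLabel pats ar L) :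
    Set.BijOn (fun n : St F × Pos => n.2 ++ L n.1)
      {n : St F × Pos | Node pats ar L t n.1 n.2} (Dom t) ∧
    {n : St F × Pos | Node pats ar L t n.1 n.2}.Finite := by
  have hmapsTo : ∀ n ∈ {n : St F × Pos | Node pats ar L t n.1 n.2},
      (fun n : St F × Pos => n.2 ++ L n.1) n ∈ Dom t := by
    rintro ⟨s, p⟩ hn
    exact node_phi_dom hw hpats hWF hpv hL hn
  have hroot_work : ∀ x ∈ Dom t, x ∈ Work t (initSt pats) [] := by
    intro x hx
    obtain ⟨ℓ, hℓ⟩ := hpats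
    have hg : ({(ℓ, ([] : Pos))}, (ℓ, ([] : Pos))) ∈ initSt pats := ⟨ℓ, hℓ, rfl⟩
    exact ⟨x, (List.nil_append x).symm, hx, [], posMO_intro hg rfl,
      ⟨x, (List.nil_append x).symm⟩⟩
  have hInj : Set.InjOn (fun n : St F × Pos => n.2 ++ L n.1)
      {n : St F × Pos | Node pats ar L t n.1 n.2} := by
    rintro ⟨s₁, p₁⟩ h₁ ⟨s₂, p₂⟩ h₂ heq
    have hd₁ := node_desc_root h₁
    have hd₂ := node_desc_root h₂
    have hres := (main_key hc hw hpats hWF hpv hL (Work t (initSt pats) []).ncard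
      (initSt pats) [] Node.root le_rfl).2 _ _ _ _ hd₁ hd₂ heq
    exact Prod.ext_iff.mpr ⟨hres.1, hres.2⟩
  have hSurj : Set.SurjOn (fun n : St F × Pos => n.2 ++ L n.1)
      {n : St F × Pos | Node pats ar L t n.1 n.2} (Dom t) := by
    intro x hx
    obtain ⟨s₁, p₁, hdsc, he⟩ := (main_key hc hw hpats hWF hpv hL
      (Work t (initSt pats) []).ncard (initSt pats) [] Node.root le_rfl).1 x
      (hroot_work x hx)
    exact ⟨(s₁, p₁), desc_node hdsc Node.root, he⟩
  refine ⟨⟨hmapsTo, hInj, hSurj⟩, ?_⟩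
  exact Set.Finite.of_finite_image
    ((dom_finite t).subset (Set.image_subset_iff.mpr hmapsTo)) hInj
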